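/- For every extreme point (x*, y*, w*, z*, s*) of the polytope P = conv(Q) and every time period t ∈ {1, …, T}, the stock level s*_t belongs to the set S = { K − Σ_{t∈𝒯} Σ_{v∈𝒱} (λ¹_{v,t} L^y_{v,t} + λ²_{v,t} U^y_{v,t} + λ³_{v,t} L^x_{v,t} + λ⁴_{v,t} U^x_{v,t}) : K ∈ {0, s₀, L^s_1, …, L^s_T, U^s_1, …, U^s_T}, λ^j_{v,t} ∈ {−1, 0, 1} for j = 1,2,3,4 }. -/

import Mathlib

open scoped BigOperators

/-- A point of the warehouse problem: purchases `x`, sales `y`,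
purchase indicators `w`, sale indicators `z` (all indexed by vendor and time),
and stock levels `s` (indexed by time). -/
abbrev WPoint (V T : ℕ) :=
  (Fin V → Fin T → ℝ) × (Fin V → Fin T → ℝ) × (Fin V → Fin T → ℝ) ×
    (Fin V → Fin T → ℝ) × (Fin T → ℝ)

namespace WPoint

variable {V T : ℕ}

def x (p : WPoint V T) : Fin V → Fin T → ℝ := p.1
def y (p : WPoint V T) : Fin V → Fin T → ℝ := p.2.1
def w (p : WPoint V T) : Fin V → Fin T → ℝ := p.2.2.1
def z (p : WPoint V T) : Fin V → Fin T → ℝ := p.2.2.2.1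
def s (p : WPoint V T) : Fin T → ℝ := p.2.2.2.2

end WPoint

/-- A selector of one of the `x`/`y` decision variables. -/
structure WVar (V T : ℕ) where
  isX : Bool
  v : Fin V
  t : Fin T

/-- The value of the selected variable. -/
def WVar.val {V T : ℕ} (x y : Fin V → Fin T → ℝ) (u : WVar V T) : ℝ :=
  if u.isX then x u.v u.t else y u.v u.t

/-- The lower bound of the selected variable. -/
def WVar.lb {V T : ℕ} (Lx Ly : Fin V → Fin T → ℝ) (u : WVar V T) : ℝ :=
  if u.isX then Lx u.v u.t else Ly u.v u.t

/-- The upper bound of the selected variable. -/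
def WVar.ub {V T : ℕ} (Ux Uy : Fin V → Fin T → ℝ) (u : WVar V T) : ℝ :=
  if u.isX then Ux u.v u.t else Uy u.v u.t

/-- A generalized complementarity constraint `(V₁ - B₁)(V₂ - B₂) = 0`. -/
structure CompCon (V T : ℕ) where
  V1 : WVar V T
  V2 : WVar V T
  B1 : ℝ
  B2 : ℝ

/-- Validity of a complementarity tuple: the time index of `V₁` is at most that of `V₂`,
and each constant is zero or the lower or upper bound of the corresponding variable. -/
def ValidCompCon {V T : ℕ} (Lx Ux Ly Uy : Fin V → Fin T → ℝ) (c : CompCon V T) : Prop :=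
  c.V1.t ≤ c.V2.t ∧
  (c.B1 = 0 ∨ c.B1 = c.V1.lb Lx Ly ∨ c.B1 = c.V1.ub Ux Uy) ∧
  (c.B2 = 0 ∨ c.B2 = c.V2.lb Lx Ly ∨ c.B2 = c.V2.ub Ux Uy)

/-- The stock level at the end of period `t - 1` (the initial stock `s0` when `t = 1`). -/
def prevStock {T : ℕ} (s0 : ℝ) (s : Fin T → ℝ) (t : Fin T) : ℝ :=
  if _ : (t : ℕ) = 0 then s0 else s ⟨(t : ℕ) - 1, lt_of_le_of_lt (Nat.sub_le _ _) t.isLt⟩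

/-- The feasible region `Q` of the warehouse problem. -/
def Qset {V T : ℕ} (s0 : ℝ) (Ls Us : Fin T → ℝ) (Lx Ux Ly Uy : Fin V → Fin T → ℝ)
    (C : Finset (CompCon V T)) : Set (WPoint V T) :=
  { p | (∀ t, p.s t = prevStock s0 p.s t - ∑ v, p.y v t + ∑ v, p.x v t) ∧
        (∀ t, Ls t ≤ p.s t ∧ p.s t ≤ Us t) ∧
        (∀ t, ∑ v, p.y v t ≤ prevStock s0 p.s t) ∧
        (∀ c ∈ C, (c.V1.val p.x p.y - c.B1) * (c.V2.val p.x p.y - c.B2) = 0) ∧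
        (∀ v t, Ly v t * p.z v t ≤ p.y v t ∧ p.y v t ≤ Uy v t * p.z v t) ∧
        (∀ v t, Lx v t * p.w v t ≤ p.x v t ∧ p.x v t ≤ Ux v t * p.w v t) ∧
        (∀ v t, p.w v t = 0 ∨ p.w v t = 1) ∧
        (∀ v t, p.z v t = 0 ∨ p.z v t = 1) }

/-- The set `S` of candidate extreme stock levels. -/
def Sset {V T : ℕ} (s0 : ℝ) (Ls Us : Fin T → ℝ) (Lx Ux Ly Uy : Fin V → Fin T → ℝ) :
    Set ℝ :=
  { r | ∃ (K : ℝ) (lam : Fin 4 → Fin V → Fin T → ℝ),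
      (K = 0 ∨ K = s0 ∨ (∃ t, K = Ls t) ∨ (∃ t, K = Us t)) ∧
      (∀ j v t, lam j v t = -1 ∨ lam j v t = 0 ∨ lam j v t = 1) ∧
      r = K - ∑ t, ∑ v,
        (lam 0 v t * Ly v t + lam 1 v t * Uy v t + lam 2 v t * Lx v t + lam 3 v t * Ux v t) }

namespace WAux

variable {V T : ℕ}

/-- Stock level after `n` periods (`n = 0` gives the initial stock). -/
def stk (s0 : ℝ) (s : Fin T → ℝ) (n : ℕ) : ℝ :=
  if h : 0 < n ∧ n ≤ T then s ⟨n - 1, by omega⟩ else s0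

lemma stk_zero (s0 : ℝ) (s : Fin T → ℝ) : stk s0 s 0 = s0 := by simp [stk]

lemma stk_succ (s0 : ℝ) (s : Fin T → ℝ) (n : ℕ) (h : n < T) :
    stk s0 s (n + 1) = s ⟨n, h⟩ := by
  have : 0 < n + 1 ∧ n + 1 ≤ T := ⟨Nat.succ_pos n, Nat.succ_le_of_lt h⟩
  simp [stk, this]

lemma prevStock_eq_stk (s0 : ℝ) (s : Fin T → ℝ) (t : Fin T) :
    prevStock s0 s t = stk s0 s t.val := by
  unfold prevStock stk
  rcases Nat.eq_zero_or_pos t.val with h | h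
  · simp [h]
  · have ht : t.val ≤ T := le_of_lt t.isLt
    simp [h, ht, Nat.pos_iff_ne_zero.mp h]

/-- The values a non-free variable may take. -/
def tri (L U v : ℝ) : Prop := v = 0 ∨ v = L ∨ v = U

lemma tri_if_eq {L U val e : ℝ} (he3 : e ≠ 0 → tri L U val) :
    (if val = L ∧ e ≠ 0 then -e else 0) * L +
      (if val ≠ L ∧ val = U ∧ e ≠ 0 then -e else 0) * U = -(e * val) := by
  by_cases c1 : val = L ∧ e ≠ 0
  · rw [if_pos c1, if_neg (by tauto)]
    rw [← c1.1]; ring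
  · rw [if_neg c1]
    by_cases c2 : val ≠ L ∧ val = U ∧ e ≠ 0
    · rw [if_pos c2]
      rw [← c2.2.1]; ring
    · rw [if_neg c2]
      by_cases he : e = 0
      · rw [he]; ring
      · have h0 : val = 0 := by
          rcases he3 he with h | h | h
          · exact h
          · exact absurd ⟨h, he⟩ c1
          · by_cases hL : val = L
            · exact absurd ⟨hL, he⟩ c1
            · exact absurd ⟨hL, h, he⟩ c2
        rw [h0]; ring

/-- A signed ±1/0 representation of a real number by bounds of variables
with support in `P`. -/
def ReprOn (Lx Ux Ly Uy : Fin V → Fin T → ℝ) (P : Fin T → Prop) (r : ℝ) : Prop :=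
  ∃ lam : Fin 4 → Fin V → Fin T → ℝ,
    (∀ j v τ, lam j v τ = -1 ∨ lam j v τ = 0 ∨ lam j v τ = 1) ∧
    (∀ j v τ, ¬ P τ → lam j v τ = 0) ∧
    r = - ∑ τ, ∑ v,
      (lam 0 v τ * Ly v τ + lam 1 v τ * Uy v τ + lam 2 v τ * Lx v τ + lam 3 v τ * Ux v τ)

lemma ReprOn_zero (Lx Ux Ly Uy : Fin V → Fin T → ℝ) (P : Fin T → Prop) :
    ReprOn Lx Ux Ly Uy P 0 := by
  exact ⟨fun _ _ _ => 0, fun _ _ _ => Or.inr (Or.inl rfl), fun _ _ _ _ => rfl, by simp⟩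

lemma ReprOn_mono {Lx Ux Ly Uy : Fin V → Fin T → ℝ} {P P' : Fin T → Prop} {r : ℝ}
    (hPP : ∀ τ, P τ → P' τ) (h : ReprOn Lx Ux Ly Uy P r) : ReprOn Lx Ux Ly Uy P' r := by
  obtain ⟨lam, h1, h2, h3⟩ := h
  exact ⟨lam, h1, fun j v τ hτ => h2 j v τ (fun hP => hτ (hPP τ hP)), h3⟩

lemma ReprOn_addXY {Lx Ux Ly Uy : Fin V → Fin T → ℝ} {P : Fin T → Prop} {r : ℝ}
    {x y : Fin V → Fin T → ℝ} {n : ℕ} (hn : n < T)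
    (h : ReprOn Lx Ux Ly Uy P r) (hPn : ¬ P ⟨n, hn⟩)
    (ex ey : ℝ) (hex : ex = -1 ∨ ex = 0 ∨ ex = 1) (hey : ey = -1 ∨ ey = 0 ∨ ey = 1)
    (hx3 : ∀ v, ex ≠ 0 → tri (Lx v ⟨n, hn⟩) (Ux v ⟨n, hn⟩) (x v ⟨n, hn⟩))
    (hy3 : ∀ v, ey ≠ 0 → tri (Ly v ⟨n, hn⟩) (Uy v ⟨n, hn⟩) (y v ⟨n, hn⟩)) :
    ReprOn Lx Ux Ly Uy (fun τ => P τ ∨ τ = ⟨n, hn⟩)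
      ((r + ex * ∑ v, x v ⟨n, hn⟩) + ey * ∑ v, y v ⟨n, hn⟩) := by
  classical
  obtain ⟨lam, h1, h2, h3⟩ := h
  set τn : Fin T := ⟨n, hn⟩ with hτn
  set l0 : Fin V → ℝ := fun v => if y v τn = Ly v τn ∧ ey ≠ 0 then -ey else 0 with hl0
  set l1 : Fin V → ℝ := fun v =>
    if y v τn ≠ Ly v τn ∧ y v τn = Uy v τn ∧ ey ≠ 0 then -ey else 0 with hl1
  set l2 : Fin V → ℝ := fun v => if x v τn = Lx v τn ∧ ex ≠ 0 then -ex else 0 with hl2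
  set l3 : Fin V → ℝ := fun v =>
    if x v τn ≠ Lx v τn ∧ x v τn = Ux v τn ∧ ex ≠ 0 then -ex else 0 with hl3
  set lam' : Fin 4 → Fin V → Fin T → ℝ := fun j v τ => if τ = τn then
      (if j = 0 then l0 v else if j = 1 then l1 v else if j = 2 then l2 v else l3 v)
      else lam j v τ with hlam'
  have neg : ∀ e : ℝ, (e = -1 ∨ e = 0 ∨ e = 1) → ∀ b : Prop, ∀ _ : Decidable b,
      ((if b then -e else 0) = -1 ∨ (if b then -e else 0) = 0 ∨ (if b then -e else 0) = 1) := by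
    rintro e (rfl | rfl | rfl) b hb <;> (split <;> norm_num)
  refine ⟨lam', ?_, ?_, ?_⟩
  · intro j v τ
    rw [hlam']; dsimp only
    split
    · split
      · exact neg _ hey _ _
      · split
        · exact neg _ hey _ _
        · split
          · exact neg _ hex _ _
          · exact neg _ hex _ _
    · exact h1 j v τ
  · intro j v τ hτ
    obtain ⟨hτ1, hτ2⟩ := not_or.mp hτ
    rw [hlam']; dsimp only
    rw [if_neg hτ2]
    exact h2 j v τ hτ1
  · have hGnew : ∀ τ, (∑ v, (lam' 0 v τ * Ly v τ + lam' 1 v τ * Uy v τ +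
        lam' 2 v τ * Lx v τ + lam' 3 v τ * Ux v τ))
        = (∑ v, (lam 0 v τ * Ly v τ + lam 1 v τ * Uy v τ +
            lam 2 v τ * Lx v τ + lam 3 v τ * Ux v τ)) +
          (if τ = τn then -(ex * ∑ v, x v τn) - ey * ∑ v, y v τn else 0) := by
      intro τ
      by_cases hττ : τ = τn
      · rw [hττ, if_pos rfl]
        have hold : (∑ v, (lam 0 v τn * Ly v τn + lam 1 v τn * Uy v τn +
            lam 2 v τn * Lx v τn + lam 3 v τn * Ux v τn)) = 0 := by
          apply Finset.sum_eq_zero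
          intro v _
          rw [h2 0 v τn hPn, h2 1 v τn hPn, h2 2 v τn hPn, h2 3 v τn hPn]; ring
        rw [hold, zero_add]
        have hterm : ∀ v, lam' 0 v τn * Ly v τn + lam' 1 v τn * Uy v τn +
            lam' 2 v τn * Lx v τn + lam' 3 v τn * Ux v τn
            = -(ex * x v τn) + -(ey * y v τn) := by
          intro v
          have e0 : lam' 0 v τn = l0 v := by rw [hlam']; simp
          have e1 : lam' 1 v τn = l1 v := by rw [hlam']; simp
          have e2 : lam' 2 v τn = l2 v := by rw [hlam']; simp
          have e3 : lam' 3 v τn = l3 v := by rw [hlam']; simp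
          rw [e0, e1, e2, e3, hl0, hl1, hl2, hl3]; dsimp only
          have hy := tri_if_eq (L := Ly v τn) (U := Uy v τn) (val := y v τn) (e := ey)
            (fun he => hy3 v he)
          have hx := tri_if_eq (L := Lx v τn) (U := Ux v τn) (val := x v τn) (e := ex)
            (fun he => hx3 v he)
          linarith [hy, hx]
        rw [Finset.sum_congr rfl (fun v _ => hterm v)]
        rw [Finset.sum_add_distrib]
        simp only [Finset.sum_neg_distrib, ← Finset.mul_sum]
        ring
      · rw [if_neg hττ]
        have : ∀ v j, lam' j v τ = lam j v τ := by
          intro v j; rw [hlam']; dsimp only; rw [if_neg hττ]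
        simp only [this]
        ring
    rw [Finset.sum_congr rfl (fun τ _ => hGnew τ), Finset.sum_add_distrib,
      Finset.sum_ite_eq' Finset.univ τn]
    simp only [Finset.mem_univ, if_pos]
    rw [h3]
    ring

end WAux
namespace WAux

variable {V T : ℕ}

def dE (dx dy : Fin V → Fin T → ℝ) : ℕ → ℝ := fun n =>
  if h : n < T then (∑ v, dx v ⟨n, h⟩) - (∑ v, dy v ⟨n, h⟩) else 0

def Dcum (dx dy : Fin V → Fin T → ℝ) : ℕ → ℝ := fun n => ∑ m ∈ Finset.range n, dE dx dy m

lemma Dcum_zero (dx dy : Fin V → Fin T → ℝ) : Dcum dx dy 0 = 0 := by simp [Dcum]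

lemma Dcum_succ (dx dy : Fin V → Fin T → ℝ) (n : ℕ) :
    Dcum dx dy (n + 1) = Dcum dx dy n + dE dx dy n := Finset.sum_range_succ _ _

lemma perturb_mem {s0 : ℝ} {Ls Us : Fin T → ℝ} {Lx Ux Ly Uy : Fin V → Fin T → ℝ}
    {C : Finset (CompCon V T)} (hC : ∀ c ∈ C, ValidCompCon Lx Ux Ly Uy c)
    {p : WPoint V T} (hp : p ∈ Qset s0 Ls Us Lx Ux Ly Uy C)
    (dx dy : Fin V → Fin T → ℝ) (ε : ℝ)
    (hgx : ∀ v τ, dx v τ ≠ 0 → (|dx v τ| ≤ 1 ∧ ¬ tri (Lx v τ) (Ux v τ) (WPoint.x p v τ) ∧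
        Lx v τ + ε ≤ WPoint.x p v τ ∧ WPoint.x p v τ + ε ≤ Ux v τ))
    (hgy : ∀ v τ, dy v τ ≠ 0 → (|dy v τ| ≤ 1 ∧ ¬ tri (Ly v τ) (Uy v τ) (WPoint.y p v τ) ∧
        Ly v τ + ε ≤ WPoint.y p v τ ∧ WPoint.y p v τ + ε ≤ Uy v τ))
    (hDs : ∀ τ : Fin T, |Dcum dx dy (τ.val + 1)| ≤ 1)
    (hSb : ∀ τ : Fin T, Dcum dx dy (τ.val + 1) ≠ 0 →
        Ls τ + ε ≤ WPoint.s p τ ∧ WPoint.s p τ + ε ≤ Us τ)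
    (hSales : ∀ τ : Fin T, (∑ v, dy v τ) = Dcum dx dy τ.val ∨
        ((∑ v, dy v τ) - Dcum dx dy τ.val = -1 ∧
          (∑ v, WPoint.y p v τ) + ε ≤ stk s0 (WPoint.s p) τ.val))
    (ε' : ℝ) (hε' : |ε'| ≤ ε) :
    ((fun v τ => WPoint.x p v τ + ε' * dx v τ, fun v τ => WPoint.y p v τ + ε' * dy v τ,
      WPoint.w p, WPoint.z p,
      fun τ => WPoint.s p τ + ε' * Dcum dx dy (τ.val + 1)) : WPoint V T)
      ∈ Qset s0 Ls Us Lx Ux Ly Uy C := by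
  obtain ⟨hbal, hsb, hsales, hcomp, hyb, hxb, hw, hz⟩ := hp
  have hε : 0 ≤ ε := le_trans (abs_nonneg ε') hε'
  have hεε : -ε ≤ ε' ∧ ε' ≤ ε := abs_le.mp hε'
  set q : WPoint V T := (fun v τ => WPoint.x p v τ + ε' * dx v τ,
      fun v τ => WPoint.y p v τ + ε' * dy v τ, WPoint.w p, WPoint.z p,
      fun τ => WPoint.s p τ + ε' * Dcum dx dy (τ.val + 1)) with hq
  have hqx : ∀ v τ, WPoint.x q v τ = WPoint.x p v τ + ε' * dx v τ := fun _ _ => rfl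
  have hqy : ∀ v τ, WPoint.y q v τ = WPoint.y p v τ + ε' * dy v τ := fun _ _ => rfl
  have hqw : WPoint.w q = WPoint.w p := rfl
  have hqz : WPoint.z q = WPoint.z p := rfl
  have hqs : ∀ τ, WPoint.s q τ = WPoint.s p τ + ε' * Dcum dx dy (τ.val + 1) := fun _ => rfl
  have hprev : ∀ τ : Fin T, prevStock s0 (WPoint.s q) τ
      = prevStock s0 (WPoint.s p) τ + ε' * Dcum dx dy τ.val := by
    intro τ
    unfold prevStock
    by_cases h0 : (τ : ℕ) = 0
    · rw [dif_pos h0, dif_pos h0, h0, Dcum_zero]; ring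
    · rw [dif_neg h0, dif_neg h0, hqs]
      have : (τ : ℕ) - 1 + 1 = (τ : ℕ) := Nat.succ_pred_eq_of_pos (Nat.pos_of_ne_zero h0)
      rw [this]
  -- abbreviations for perturbed sums
  have hsumx : ∀ τ, (∑ v, WPoint.x q v τ) = (∑ v, WPoint.x p v τ) + ε' * ∑ v, dx v τ := by
    intro τ
    simp only [hqx, Finset.sum_add_distrib, Finset.mul_sum]
  have hsumy : ∀ τ, (∑ v, WPoint.y q v τ) = (∑ v, WPoint.y p v τ) + ε' * ∑ v, dy v τ := by
    intro τ
    simp only [hqy, Finset.sum_add_distrib, Finset.mul_sum]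
  have hdE : ∀ τ : Fin T, dE dx dy τ.val = (∑ v, dx v τ) - (∑ v, dy v τ) := by
    intro τ
    simp only [dE, dif_pos τ.isLt]
  refine ⟨?_, ?_, ?_, ?_, ?_, ?_, ?_, ?_⟩
  · -- balance
    intro τ
    rw [hqs, hprev, hsumx, hsumy, Dcum_succ, hdE, hbal τ]
    ring
  · -- stock bounds
    intro τ
    rw [hqs]
    by_cases hD : Dcum dx dy (τ.val + 1) = 0
    · rw [hD]
      simpa using hsb τ
    · obtain ⟨h1, h2⟩ := hSb τ hD
      have habs : |ε' * Dcum dx dy (τ.val + 1)| ≤ ε := by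
        rw [abs_mul]
        calc |ε'| * |Dcum dx dy (τ.val + 1)| ≤ ε * 1 :=
          mul_le_mul hε' (hDs τ) (abs_nonneg _) hε
        _ = ε := mul_one ε
      obtain ⟨ha1, ha2⟩ := abs_le.mp habs
      constructor <;> linarith
  · -- sales
    intro τ
    rw [hsumy, hprev]
    rcases hSales τ with h | ⟨h, hgap⟩
    · rw [h]
      have := hsales τ
      linarith
    · have := prevStock_eq_stk s0 (WPoint.s p) τ
      rw [this]
      nlinarith [hεε.1, hεε.2, hgap, h]
  · -- complementarity
    intro c hc
    have hpc := hcomp c hc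
    obtain ⟨_, hB1, hB2⟩ := hC c hc
    have key : ∀ (u : WVar V T) (B : ℝ),
        (B = 0 ∨ B = u.lb Lx Ly ∨ B = u.ub Ux Uy) →
        WVar.val (WPoint.x p) (WPoint.y p) u = B →
        WVar.val (WPoint.x q) (WPoint.y q) u = B := by
      intro u B hB hval
      cases hu : u.isX
      · -- a y variable
        simp only [WVar.val, WVar.lb, WVar.ub, hu, if_neg, Bool.false_eq_true, if_false] at hB hval ⊢
        rw [hqy]
        have hd0 : dy u.v u.t = 0 := by
          by_contra hne
          have htri : tri (Ly u.v u.t) (Uy u.v u.t) (WPoint.y p u.v u.t) := by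
            rcases hB with rfl | rfl | rfl
            · exact Or.inl hval
            · exact Or.inr (Or.inl hval)
            · exact Or.inr (Or.inr hval)
          exact (hgy u.v u.t hne).2.1 htri
        rw [hd0, hval]; ring
      · simp only [WVar.val, WVar.lb, WVar.ub, hu, if_true] at hB hval ⊢
        rw [hqx]
        have hd0 : dx u.v u.t = 0 := by
          by_contra hne
          have htri : tri (Lx u.v u.t) (Ux u.v u.t) (WPoint.x p u.v u.t) := by
            rcases hB with rfl | rfl | rfl
            · exact Or.inl hval
            · exact Or.inr (Or.inl hval)
            · exact Or.inr (Or.inr hval)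
          exact (hgx u.v u.t hne).2.1 htri
        rw [hd0, hval]; ring
    rcases mul_eq_zero.mp hpc with h | h
    · have := key c.V1 c.B1 hB1 (by linarith)
      apply mul_eq_zero.mpr
      exact Or.inl (by rw [this]; ring)
    · have := key c.V2 c.B2 hB2 (by linarith)
      apply mul_eq_zero.mpr
      exact Or.inr (by rw [this]; ring)
  · -- y bounds
    intro v τ
    rw [hqy, hqz]
    by_cases hd : dy v τ = 0
    · rw [hd]
      simpa using hyb v τ
    · obtain ⟨habs1, htri, hg1, hg2⟩ := hgy v τ hd
      have hz1 : WPoint.z p v τ = 1 := by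
        rcases hz v τ with h | h
        · exfalso
          obtain ⟨hb1, hb2⟩ := hyb v τ
          rw [h] at hb1 hb2
          apply htri
          exact Or.inl (le_antisymm (by linarith) (by linarith))
        · exact h
      rw [hz1, mul_one, mul_one]
      have : |ε' * dy v τ| ≤ ε := by
        rw [abs_mul]
        calc |ε'| * |dy v τ| ≤ ε * 1 := mul_le_mul hε' habs1 (abs_nonneg _) hε
        _ = ε := mul_one ε
      obtain ⟨ha1, ha2⟩ := abs_le.mp this
      constructor <;> linarith
  · -- x bounds
    intro v τ
    rw [hqx, hqw]
    by_cases hd : dx v τ = 0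
    · rw [hd]
      simpa using hxb v τ
    · obtain ⟨habs1, htri, hg1, hg2⟩ := hgx v τ hd
      have hw1 : WPoint.w p v τ = 1 := by
        rcases hw v τ with h | h
        · exfalso
          obtain ⟨hb1, hb2⟩ := hxb v τ
          rw [h] at hb1 hb2
          apply htri
          exact Or.inl (le_antisymm (by linarith) (by linarith))
        · exact h
      rw [hw1, mul_one, mul_one]
      have : |ε' * dx v τ| ≤ ε := by
        rw [abs_mul]
        calc |ε'| * |dx v τ| ≤ ε * 1 := mul_le_mul hε' habs1 (abs_nonneg _) hε
        _ = ε := mul_one ε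
      obtain ⟨ha1, ha2⟩ := abs_le.mp this
      constructor <;> linarith
  · exact fun v τ => hw v τ
  · exact fun v τ => hz v τ

end WAux
namespace WAux

variable {V T : ℕ}

lemma wpoint_ext {a b : WPoint V T} (h1 : a.1 = b.1) (h2 : a.2.1 = b.2.1)
    (h3 : a.2.2.1 = b.2.2.1) (h4 : a.2.2.2.1 = b.2.2.2.1)
    (h5 : a.2.2.2.2 = b.2.2.2.2) : a = b := by
  obtain ⟨a1, a2, a3, a4, a5⟩ := a
  obtain ⟨b1, b2, b3, b4, b5⟩ := b
  simp_all

lemma Dcum_char {dx dy : Fin V → Fin T → ℝ} {b f : ℕ} (hbf : b < f)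
    (h : ∀ m, m < T → dE dx dy m = if m = b then 1 else if m = f then -1 else 0) :
    ∀ m, m ≤ T → Dcum dx dy m = if b + 1 ≤ m ∧ m ≤ f then 1 else 0 := by
  intro m
  induction m with
  | zero =>
    intro _
    rw [Dcum_zero, if_neg (by omega)]
  | succ m ih =>
    intro hm
    rw [Dcum_succ, ih (by omega), h m (by omega)]
    by_cases hmb : m = b
    · subst hmb
      rw [if_neg (by omega), if_pos rfl, if_pos (by omega)]
      norm_num
    · by_cases hmf : m = f
      · subst hmf
        rw [if_pos ⟨by omega, le_refl m⟩, if_neg hmb, if_pos rfl, if_neg (by omega)]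
        norm_num
      · rw [if_neg hmb, if_neg hmf]
        by_cases hin : b + 1 ≤ m ∧ m ≤ f
        · rw [if_pos hin, if_pos (by omega)]; ring
        · rw [if_neg hin, if_neg (by omega)]; ring

end WAux
open WAux

/-- Every coordinate `s*_t` of an extreme point of `P = conv(Q)`
belongs to the set `S`. -/
theorem stock_levels_of_extremePoint_mem_Sset {V T : ℕ} (s0 : ℝ)
    (Ls Us : Fin T → ℝ) (Lx Ux Ly Uy : Fin V → Fin T → ℝ)
    (C : Finset (CompCon V T))
    (hLs : ∀ t, 0 ≤ Ls t) (hsLU : ∀ t, Ls t ≤ Us t)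
    (hLx : ∀ v t, 0 ≤ Lx v t) (hxLU : ∀ v t, Lx v t ≤ Ux v t)
    (hLy : ∀ v t, 0 ≤ Ly v t) (hyLU : ∀ v t, Ly v t ≤ Uy v t)
    (hC : ∀ c ∈ C, ValidCompCon Lx Ux Ly Uy c)
    (p : WPoint V T)
    (hp : p ∈ Set.extremePoints ℝ (convexHull ℝ (Qset s0 Ls Us Lx Ux Ly Uy C)))
    (t : Fin T) :
    WPoint.s p t ∈ Sset s0 Ls Us Lx Ux Ly Uy := by
  classical
  have hpQ : p ∈ Qset s0 Ls Us Lx Ux Ly Uy C := extremePoints_convexHull_subset hp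
  obtain ⟨hbal, hsb, hsales, hcomp, hyb, hxb, hw, hz⟩ := hpQ
  have hpQ : p ∈ Qset s0 Ls Us Lx Ux Ly Uy C := extremePoints_convexHull_subset hp
  set st : ℕ → ℝ := stk s0 (WPoint.s p) with hst
  have hst0 : st 0 = s0 := stk_zero _ _
  have hstS : ∀ (n : ℕ) (h : n < T), st (n + 1) = WPoint.s p ⟨n, h⟩ :=
    fun n h => stk_succ _ _ n h
  have hbal' : ∀ (n : ℕ) (hn : n < T),
      st (n + 1) = st n - (∑ v, WPoint.y p v ⟨n, hn⟩) + (∑ v, WPoint.x p v ⟨n, hn⟩) := by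
    intro n hn
    rw [hstS n hn]
    have := hbal ⟨n, hn⟩
    rw [prevStock_eq_stk] at this
    exact this
  -- predicates
  set ST : ℕ → Prop := fun n => ∃ h : n < T, (∑ v, WPoint.y p v ⟨n, h⟩) = st n with hSTdef
  set IntS : ℕ → Prop := fun n => ∃ h : n < T,
    Ls ⟨n, h⟩ < WPoint.s p ⟨n, h⟩ ∧ WPoint.s p ⟨n, h⟩ < Us ⟨n, h⟩ with hIntSdef
  set FrX : Fin V → Fin T → Prop :=
    fun v τ => ¬ tri (Lx v τ) (Ux v τ) (WPoint.x p v τ) with hFrXdef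
  set FrY : Fin V → Fin T → Prop :=
    fun v τ => ¬ tri (Ly v τ) (Uy v τ) (WPoint.y p v τ) with hFrYdef
  set KA : ℝ → Prop := fun K =>
    K = 0 ∨ K = s0 ∨ (∃ τ, K = Ls τ) ∨ (∃ τ, K = Us τ) with hKAdef
  -- strict bound facts for free variables
  have hFrXgap : ∀ v τ, FrX v τ → Lx v τ < WPoint.x p v τ ∧ WPoint.x p v τ < Ux v τ := by
    intro v τ hfr
    rcases hw v τ with h0 | h1
    · exfalso; apply hfr
      obtain ⟨hb1, hb2⟩ := hxb v τ
      rw [h0, mul_zero] at hb1 hb2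
      exact Or.inl (le_antisymm hb2 hb1)
    · obtain ⟨hb1, hb2⟩ := hxb v τ
      rw [h1, mul_one] at hb1 hb2
      have h2 : WPoint.x p v τ ≠ Lx v τ := fun h => hfr (Or.inr (Or.inl h))
      have h3 : WPoint.x p v τ ≠ Ux v τ := fun h => hfr (Or.inr (Or.inr h))
      exact ⟨lt_of_le_of_ne hb1 (Ne.symm h2), lt_of_le_of_ne hb2 h3⟩
  have hFrYgap : ∀ v τ, FrY v τ → Ly v τ < WPoint.y p v τ ∧ WPoint.y p v τ < Uy v τ := by
    intro v τ hfr
    rcases hz v τ with h0 | h1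
    · exfalso; apply hfr
      obtain ⟨hb1, hb2⟩ := hyb v τ
      rw [h0, mul_zero] at hb1 hb2
      exact Or.inl (le_antisymm hb2 hb1)
    · obtain ⟨hb1, hb2⟩ := hyb v τ
      rw [h1, mul_one] at hb1 hb2
      have h2 : WPoint.y p v τ ≠ Ly v τ := fun h => hfr (Or.inr (Or.inl h))
      have h3 : WPoint.y p v τ ≠ Uy v τ := fun h => hfr (Or.inr (Or.inr h))
      exact ⟨lt_of_le_of_ne hb1 (Ne.symm h2), lt_of_le_of_ne hb2 h3⟩
  have hsales' : ∀ (k : ℕ) (hk : k < T), (∑ v, WPoint.y p v ⟨k, hk⟩) ≤ st k := by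
    intro k hk
    have := hsales ⟨k, hk⟩
    rw [prevStock_eq_stk] at this
    exact this
  have hSTgap : ∀ (k : ℕ) (hk : k < T), ¬ ST k → (∑ v, WPoint.y p v ⟨k, hk⟩) < st k := by
    intro k hk hnst
    refine lt_of_le_of_ne (hsales' k hk) ?_
    intro heq
    exact hnst ⟨hk, heq⟩
  -- backward induction claim
  have claimB : ∀ e, e ≤ T →
      (∃ K, KA K ∧ ReprOn Lx Ux Ly Uy (fun τ => τ.val < e) (st e - K)) ∨
      (∃ b, b + 1 ≤ e ∧
        (∃ hb : b < T, (∃ v, FrX v ⟨b, hb⟩) ∨ ((∃ v, FrY v ⟨b, hb⟩) ∧ ¬ ST b)) ∧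
        (∀ k (hk : k < T), b ≤ k → k + 2 ≤ e →
          Ls ⟨k, hk⟩ < WPoint.s p ⟨k, hk⟩ ∧ WPoint.s p ⟨k, hk⟩ < Us ⟨k, hk⟩) ∧
        (∀ k, b < k → k + 1 ≤ e → ¬ ST k)) := by
    intro e
    induction e with
    | zero =>
      intro _
      left
      refine ⟨s0, Or.inr (Or.inl rfl), ?_⟩
      rw [hst0, sub_self]
      exact ReprOn_zero _ _ _ _ _
    | succ n ih =>
      intro hn1
      have hn : n < T := hn1
      set τn : Fin T := ⟨n, hn⟩ with hτn
      have hbaln := hbal' n hn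
      by_cases hSTn : ST n
      · obtain ⟨_, hY⟩ := hSTn
        by_cases hfx : ∃ v, FrX v τn
        · right
          exact ⟨n, le_refl _, ⟨hn, Or.inl hfx⟩,
            fun k hk h1 h2 => absurd h2 (by omega),
            fun k h1 h2 => absurd h2 (by omega)⟩
        · left
          refine ⟨0, Or.inl rfl, ?_⟩
          have hax : ∀ v, tri (Lx v τn) (Ux v τn) (WPoint.x p v τn) := by
            intro v
            by_contra hcon
            exact hfx ⟨v, hcon⟩
          have hval : st (n + 1) - 0 =
              ((0 + 1 * ∑ v, WPoint.x p v ⟨n, hn⟩) + 0 * ∑ v, WPoint.y p v ⟨n, hn⟩) := by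
            rw [hbaln, hY]; ring
          rw [hval]
          refine ReprOn_mono (fun τ h => ?_)
            (ReprOn_addXY (x := WPoint.x p) (y := WPoint.y p) hn
              (ReprOn_zero Lx Ux Ly Uy (fun _ => False)) (fun h => h)
              1 0 (Or.inr (Or.inr rfl)) (Or.inr (Or.inl rfl))
              (fun v _ => hax v) (fun v h0 => absurd rfl h0))
          rcases h with h | h
          · exact absurd h (fun h => h)
          · rw [h]; exact Nat.lt_succ_self n
      · by_cases hfree : (∃ v, FrX v τn) ∨ (∃ v, FrY v τn)
        · right
          refine ⟨n, le_refl _, ⟨hn, ?_⟩,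
            fun k hk h1 h2 => absurd h2 (by omega),
            fun k h1 h2 => absurd h2 (by omega)⟩
          rcases hfree with h | h
          · exact Or.inl h
          · exact Or.inr ⟨h, hSTn⟩
        · push_neg at hfree
          obtain ⟨hfx, hfy⟩ := hfree
          have hax : ∀ v, tri (Lx v τn) (Ux v τn) (WPoint.x p v τn) :=
            fun v => not_not.mp (hfx v)
          have hay : ∀ v, tri (Ly v τn) (Uy v τn) (WPoint.y p v τn) :=
            fun v => not_not.mp (hfy v)
          rcases ih (by omega) with ⟨K, hKA, hR⟩ | ⟨b, hb1, hbfree, hbint, hbst⟩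
          · left
            refine ⟨K, hKA, ?_⟩
            have hval : st (n + 1) - K =
                ((st n - K + 1 * ∑ v, WPoint.x p v ⟨n, hn⟩) +
                  (-1) * ∑ v, WPoint.y p v ⟨n, hn⟩) := by
              rw [hbaln]; ring
            rw [hval]
            refine ReprOn_mono (fun τ h => ?_)
              (ReprOn_addXY (x := WPoint.x p) (y := WPoint.y p) hn hR (Nat.lt_irrefl n)
                1 (-1) (Or.inr (Or.inr rfl)) (Or.inl rfl)
                (fun v _ => hax v) (fun v _ => hay v))
            rcases h with h | h
            · omega
            · rw [h]; exact Nat.lt_succ_self n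
          · -- there is a free variable at index b, b + 1 ≤ n
            have hnpos : 1 ≤ n := by omega
            have hn1T : n - 1 < T := by omega
            by_cases hint : Ls ⟨n - 1, hn1T⟩ < WPoint.s p ⟨n - 1, hn1T⟩ ∧
                WPoint.s p ⟨n - 1, hn1T⟩ < Us ⟨n - 1, hn1T⟩
            · right
              refine ⟨b, by omega, hbfree, ?_, ?_⟩
              · intro k hk h1 h2
                by_cases hkn : k + 2 ≤ n
                · exact hbint k hk h1 hkn
                · have : k = n - 1 := by omega
                  subst this
                  exact hint
              · intro k h1 h2
                by_cases hkn : k + 1 ≤ n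
                · exact hbst k h1 hkn
                · have : k = n := by omega
                  subst this
                  exact hSTn
            · -- boundary at st n
              left
              have hsn : st n = WPoint.s p ⟨n - 1, hn1T⟩ := by
                have := hstS (n - 1) hn1T
                rw [(by omega : n - 1 + 1 = n)] at this
                exact this
              have hbound : st n = Ls ⟨n - 1, hn1T⟩ ∨ st n = Us ⟨n - 1, hn1T⟩ := by
                obtain ⟨hb1, hb2⟩ := hsb ⟨n - 1, hn1T⟩
                rw [hsn]
                rcases lt_or_eq_of_le hb1 with h | h
                · rcases lt_or_eq_of_le hb2 with h' | h'
                  · exact absurd ⟨h, h'⟩ hint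
                  · exact Or.inr h'
                · exact Or.inl h.symm
              set K := st n with hK
              have hKA : KA K := by
                rcases hbound with h | h
                · exact Or.inr (Or.inr (Or.inl ⟨_, h⟩))
                · exact Or.inr (Or.inr (Or.inr ⟨_, h⟩))
              refine ⟨K, hKA, ?_⟩
              have hval : st (n + 1) - K =
                  ((0 + 1 * ∑ v, WPoint.x p v ⟨n, hn⟩) +
                    (-1) * ∑ v, WPoint.y p v ⟨n, hn⟩) := by
                rw [hbaln]; ring
              rw [hval]
              refine ReprOn_mono (fun τ h => ?_)
                (ReprOn_addXY (x := WPoint.x p) (y := WPoint.y p) hn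
                  (ReprOn_zero Lx Ux Ly Uy (fun _ => False)) (fun h => h)
                  1 (-1) (Or.inr (Or.inr rfl)) (Or.inl rfl)
                  (fun v _ => hax v) (fun v _ => hay v))
              rcases h with h | h
              · exact absurd h (fun h => h)
              · rw [h]; exact Nat.lt_succ_self n
  -- forward induction claim
  have claimF : ∀ k n, T ≤ n + k → n ≤ T →
      (∃ K, KA K ∧ ReprOn Lx Ux Ly Uy (fun τ => n ≤ τ.val) (st n - K)) ∨
      (∃ f, n ≤ f ∧
        (∃ hf : f < T, ((∃ v, FrX v ⟨f, hf⟩) ∧ ¬ ST f) ∨ (∃ v, FrY v ⟨f, hf⟩)) ∧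
        (∀ m, n ≤ m → m < f → ¬ ST m) ∧
        (∀ m (hm : m < T), n ≤ m → m + 1 ≤ f →
          Ls ⟨m, hm⟩ < WPoint.s p ⟨m, hm⟩ ∧ WPoint.s p ⟨m, hm⟩ < Us ⟨m, hm⟩)) ∨
      ((∀ m, n ≤ m → ¬ ST m) ∧
       (∀ m (hm : m < T), n ≤ m →
          Ls ⟨m, hm⟩ < WPoint.s p ⟨m, hm⟩ ∧ WPoint.s p ⟨m, hm⟩ < Us ⟨m, hm⟩)) := by
    intro k
    induction k with
    | zero =>
      intro n h1 h2
      have hnT : n = T := by omega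
      subst hnT
      right; right
      constructor
      · rintro m hm ⟨h, _⟩; omega
      · intro m hm h; omega
    | succ k ihk =>
      intro n h1 h2
      by_cases hnT : n = T
      · subst hnT
        right; right
        constructor
        · rintro m hm ⟨h, _⟩; omega
        · intro m hm h; omega
      · have hn : n < T := by omega
        have IH := ihk (n + 1) (by omega) (by omega)
        set τn : Fin T := ⟨n, hn⟩ with hτn
        have hbaln := hbal' n hn
        by_cases hSTn : ST n
        · obtain ⟨_, hY⟩ := hSTn
          by_cases hfy : ∃ v, FrY v τn
          · right; left
            exact ⟨n, le_refl _, ⟨hn, Or.inr hfy⟩,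
              fun m hm1 hm2 => absurd hm2 (by omega),
              fun m hm hm1 hm2 => absurd hm2 (by omega)⟩
          · left
            refine ⟨0, Or.inl rfl, ?_⟩
            have hay : ∀ v, tri (Ly v τn) (Uy v τn) (WPoint.y p v τn) := by
              intro v
              by_contra hcon
              exact hfy ⟨v, hcon⟩
            have hval : st n - 0 =
                ((0 + 0 * ∑ v, WPoint.x p v ⟨n, hn⟩) + 1 * ∑ v, WPoint.y p v ⟨n, hn⟩) := by
              rw [← hY]; ring
            rw [hval]
            refine ReprOn_mono (fun τ h => ?_)
              (ReprOn_addXY (x := WPoint.x p) (y := WPoint.y p) hn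
                (ReprOn_zero Lx Ux Ly Uy (fun τ => n < τ.val)) (Nat.lt_irrefl n)
                0 1 (Or.inr (Or.inl rfl)) (Or.inr (Or.inr rfl))
                (fun v h0 => absurd rfl h0) (fun v _ => hay v))
            rcases h with h | h
            · omega
            · rw [h]
        · by_cases hfree : (∃ v, FrX v τn) ∨ (∃ v, FrY v τn)
          · right; left
            refine ⟨n, le_refl _, ⟨hn, ?_⟩,
              fun m hm1 hm2 => absurd hm2 (by omega),
              fun m hm hm1 hm2 => absurd hm2 (by omega)⟩
            rcases hfree with h | h
            · exact Or.inl ⟨h, hSTn⟩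
            · exact Or.inr h
          · push_neg at hfree
            obtain ⟨hfx, hfy⟩ := hfree
            have hax : ∀ v, tri (Lx v τn) (Ux v τn) (WPoint.x p v τn) :=
              fun v => not_not.mp (hfx v)
            have hay : ∀ v, tri (Ly v τn) (Uy v τn) (WPoint.y p v τn) :=
              fun v => not_not.mp (hfy v)
            by_cases hint : Ls τn < WPoint.s p τn ∧ WPoint.s p τn < Us τn
            · rcases IH with ⟨K, hKA, hR⟩ | ⟨f, hf1, hFf, hCst, hCint⟩ | ⟨hst3, hint3⟩
              · left
                refine ⟨K, hKA, ?_⟩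
                have hval : st n - K =
                    ((st (n + 1) - K + (-1) * ∑ v, WPoint.x p v ⟨n, hn⟩) +
                      1 * ∑ v, WPoint.y p v ⟨n, hn⟩) := by
                  rw [hbaln]; ring
                rw [hval]
                refine ReprOn_mono (fun τ h => ?_)
                  (ReprOn_addXY (x := WPoint.x p) (y := WPoint.y p) hn hR
                    (Nat.not_succ_le_self n)
                    (-1) 1 (Or.inl rfl) (Or.inr (Or.inr rfl))
                    (fun v _ => hax v) (fun v _ => hay v))
                rcases h with h | h
                · omega
                · rw [h]
              · right; left
                refine ⟨f, by omega, hFf, ?_, ?_⟩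
                · intro m hm1 hm2
                  rcases Nat.eq_or_lt_of_le hm1 with h | h
                  · rw [← h]; exact hSTn
                  · exact hCst m h hm2
                · intro m hm hm1 hm2
                  rcases Nat.eq_or_lt_of_le hm1 with h | h
                  · subst h; exact hint
                  · exact hCint m hm h hm2
              · right; right
                constructor
                · intro m hm1
                  rcases Nat.eq_or_lt_of_le hm1 with h | h
                  · rw [← h]; exact hSTn
                  · exact hst3 m h
                · intro m hm hm1
                  rcases Nat.eq_or_lt_of_le hm1 with h | h
                  · subst h; exact hint
                  · exact hint3 m hm h
            · -- boundary at st (n+1)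
              left
              have hbound : WPoint.s p τn = Ls τn ∨ WPoint.s p τn = Us τn := by
                obtain ⟨hb1, hb2⟩ := hsb τn
                rcases lt_or_eq_of_le hb1 with h | h
                · rcases lt_or_eq_of_le hb2 with h' | h'
                  · exact absurd ⟨h, h'⟩ hint
                  · exact Or.inr h'
                · exact Or.inl h.symm
              have hKA : KA (WPoint.s p τn) := by
                rcases hbound with h | h
                · exact Or.inr (Or.inr (Or.inl ⟨_, h⟩))
                · exact Or.inr (Or.inr (Or.inr ⟨_, h⟩))
              refine ⟨WPoint.s p τn, hKA, ?_⟩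
              have hval : st n - WPoint.s p τn =
                  ((0 + (-1) * ∑ v, WPoint.x p v ⟨n, hn⟩) +
                    1 * ∑ v, WPoint.y p v ⟨n, hn⟩) := by
                have h1 := hstS n hn
                rw [← hτn] at h1
                rw [← h1, hbaln]; ring
              rw [hval]
              refine ReprOn_mono (fun τ h => ?_)
                (ReprOn_addXY (x := WPoint.x p) (y := WPoint.y p) hn
                  (ReprOn_zero Lx Ux Ly Uy (fun τ => n < τ.val)) (Nat.lt_irrefl n)
                  (-1) 1 (Or.inl rfl) (Or.inr (Or.inr rfl))
                  (fun v _ => hax v) (fun v _ => hay v))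
              rcases h with h | h
              · omega
              · rw [h]
  -- extreme-point contradiction machinery
  have mkContra : ∀ (dx dy : Fin V → Fin T → ℝ) (ε : ℝ), 0 < ε →
      (∀ v τ, dx v τ ≠ 0 → (|dx v τ| ≤ 1 ∧ ¬ tri (Lx v τ) (Ux v τ) (WPoint.x p v τ) ∧
          Lx v τ + ε ≤ WPoint.x p v τ ∧ WPoint.x p v τ + ε ≤ Ux v τ)) →
      (∀ v τ, dy v τ ≠ 0 → (|dy v τ| ≤ 1 ∧ ¬ tri (Ly v τ) (Uy v τ) (WPoint.y p v τ) ∧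
          Ly v τ + ε ≤ WPoint.y p v τ ∧ WPoint.y p v τ + ε ≤ Uy v τ)) →
      (∀ τ : Fin T, |Dcum dx dy (τ.val + 1)| ≤ 1) →
      (∀ τ : Fin T, Dcum dx dy (τ.val + 1) ≠ 0 →
          Ls τ + ε ≤ WPoint.s p τ ∧ WPoint.s p τ + ε ≤ Us τ) →
      (∀ τ : Fin T, (∑ v, dy v τ) = Dcum dx dy τ.val ∨
          ((∑ v, dy v τ) - Dcum dx dy τ.val = -1 ∧
            (∑ v, WPoint.y p v τ) + ε ≤ st τ.val)) →
      (∃ v0 τ0, dx v0 τ0 ≠ 0 ∨ dy v0 τ0 ≠ 0) → False := by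
    intro dx dy ε hε hgx hgy hDs hSb hSales hnz
    obtain ⟨v0, τ0, hnz⟩ := hnz
    have habs : |ε| ≤ ε := by rw [abs_of_pos hε]
    have habs' : |(-ε)| ≤ ε := by rw [abs_neg, abs_of_pos hε]
    set qq : ℝ → WPoint V T := fun e =>
      (fun v τ => WPoint.x p v τ + e * dx v τ, fun v τ => WPoint.y p v τ + e * dy v τ,
        WPoint.w p, WPoint.z p,
        fun τ => WPoint.s p τ + e * Dcum dx dy (τ.val + 1)) with hqq
    have hq1Q : qq ε ∈ Qset s0 Ls Us Lx Ux Ly Uy C :=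
      perturb_mem hC hpQ dx dy ε hgx hgy hDs hSb hSales ε habs
    have hq2Q : qq (-ε) ∈ Qset s0 Ls Us Lx Ux Ly Uy C :=
      perturb_mem hC hpQ dx dy ε hgx hgy hDs hSb hSales (-ε) habs'
    have hsum : qq ε + qq (-ε) = (2 : ℝ) • p := by
      refine wpoint_ext ?_ ?_ ?_ ?_ ?_
      · funext v τ
        show (WPoint.x p v τ + ε * dx v τ) + (WPoint.x p v τ + (-ε) * dx v τ)
          = ((2 : ℝ) • p).1 v τ
        simp only [Prod.smul_fst, Pi.smul_apply, smul_eq_mul]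
        show _ = 2 * WPoint.x p v τ
        ring
      · funext v τ
        show (WPoint.y p v τ + ε * dy v τ) + (WPoint.y p v τ + (-ε) * dy v τ)
          = ((2 : ℝ) • p).2.1 v τ
        simp only [Prod.smul_snd, Prod.smul_fst, Pi.smul_apply, smul_eq_mul]
        show _ = 2 * WPoint.y p v τ
        ring
      · funext v τ
        show WPoint.w p v τ + WPoint.w p v τ = ((2 : ℝ) • p).2.2.1 v τ
        simp only [Prod.smul_snd, Prod.smul_fst, Pi.smul_apply, smul_eq_mul]
        show _ = 2 * WPoint.w p v τ
        ring
      · funext v τ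
        show WPoint.z p v τ + WPoint.z p v τ = ((2 : ℝ) • p).2.2.2.1 v τ
        simp only [Prod.smul_snd, Prod.smul_fst, Pi.smul_apply, smul_eq_mul]
        show _ = 2 * WPoint.z p v τ
        ring
      · funext τ
        show (WPoint.s p τ + ε * Dcum dx dy (τ.val + 1)) +
            (WPoint.s p τ + (-ε) * Dcum dx dy (τ.val + 1)) = ((2 : ℝ) • p).2.2.2.2 τ
        simp only [Prod.smul_snd, Pi.smul_apply, smul_eq_mul]
        show _ = 2 * WPoint.s p τ
        ring
    have hmid : (1/2 : ℝ) • qq ε + (1/2 : ℝ) • qq (-ε) = p := by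
      calc (1/2 : ℝ) • qq ε + (1/2 : ℝ) • qq (-ε)
          = (1/2 : ℝ) • (qq ε + qq (-ε)) := (smul_add _ _ _).symm
        _ = (1/2 : ℝ) • ((2:ℝ) • p) := by rw [hsum]
        _ = p := by rw [smul_smul]; norm_num
    have hseg : p ∈ openSegment ℝ (qq ε) (qq (-ε)) :=
      ⟨1/2, 1/2, by norm_num, by norm_num, by norm_num, hmid⟩
    have hq1p := hp.2 (subset_convexHull ℝ _ hq1Q)
      (subset_convexHull ℝ _ hq2Q) hseg
    rcases hnz with h | h
    · have hxx : WPoint.x p v0 τ0 + ε * dx v0 τ0 = WPoint.x p v0 τ0 :=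
        congrArg (fun q : WPoint V T => WPoint.x q v0 τ0) hq1p
      have : ε * dx v0 τ0 = 0 := by linarith
      rcases mul_eq_zero.mp this with h' | h'
      · linarith
      · exact h h'
    · have hyy : WPoint.y p v0 τ0 + ε * dy v0 τ0 = WPoint.y p v0 τ0 :=
        congrArg (fun q : WPoint V T => WPoint.y q v0 τ0) hq1p
      have : ε * dy v0 τ0 = 0 := by linarith
      rcases mul_eq_zero.mp this with h' | h'
      · linarith
      · exact h h'
  -- generic contradiction from a cleared corridor with moves at b and f
  have doCase : ∀ (b f : ℕ) (dx dy : Fin V → Fin T → ℝ) (ab af : ℝ),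
      b < f → f ≤ T →
      (∀ m, m < T → dE dx dy m = if m = b then 1 else if m = f then -1 else 0) →
      (∀ v τ, dx v τ ≠ 0 → |dx v τ| ≤ 1 ∧ FrX v τ) →
      (∀ v τ, dy v τ ≠ 0 → |dy v τ| ≤ 1 ∧ FrY v τ) →
      (∃ v0 τ0, dx v0 τ0 ≠ 0 ∨ dy v0 τ0 ≠ 0) →
      (∀ k (hk : k < T), b ≤ k → k < f →
          Ls ⟨k, hk⟩ < WPoint.s p ⟨k, hk⟩ ∧ WPoint.s p ⟨k, hk⟩ < Us ⟨k, hk⟩) →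
      (∀ k, b < k → k < f → ¬ ST k) →
      (∀ τ : Fin T, (∑ v, dy v τ) =
        (if τ.val = b then ab else 0) + (if τ.val = f then af else 0)) →
      (ab = 0 ∨ (ab = -1 ∧ ¬ ST b)) →
      (af = 1 ∨ (af = 0 ∧ (∀ hf : f < T, ¬ ST f))) →
      False := by
    intro b f dx dy ab af hbf hfT hdE hdx hdy hnz HInt HST hdysum hab haf
    have hchar := Dcum_char hbf hdE
    -- choice of ε
    set gS : Fin T → ℝ := fun τ =>
      if Ls τ < WPoint.s p τ ∧ WPoint.s p τ < Us τ then
        min (WPoint.s p τ - Ls τ) (Us τ - WPoint.s p τ) else 1 with hgS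
    set gT : Fin T → ℝ := fun τ =>
      if ST τ.val then 1 else st τ.val - ∑ v, WPoint.y p v τ with hgT
    set gV : Fin V × Fin T → ℝ := fun vτ =>
      min (if FrX vτ.1 vτ.2 then
            min (WPoint.x p vτ.1 vτ.2 - Lx vτ.1 vτ.2) (Ux vτ.1 vτ.2 - WPoint.x p vτ.1 vτ.2)
          else 1)
          (if FrY vτ.1 vτ.2 then
            min (WPoint.y p vτ.1 vτ.2 - Ly vτ.1 vτ.2) (Uy vτ.1 vτ.2 - WPoint.y p vτ.1 vτ.2)
          else 1) with hgV
    obtain ⟨v0, τ0, hnz0⟩ := hnz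
    have hne1 : (Finset.univ : Finset (Fin T)).Nonempty := ⟨t, Finset.mem_univ t⟩
    have hne2 : (Finset.univ : Finset (Fin V × Fin T)).Nonempty :=
      ⟨(v0, t), Finset.mem_univ _⟩
    set ε := min (min (Finset.univ.inf' hne1 gS) (Finset.univ.inf' hne1 gT))
      (Finset.univ.inf' hne2 gV) with hεdef
    have hgSpos : ∀ τ, 0 < gS τ := by
      intro τ
      rw [hgS]; dsimp only
      split
      · next h => exact lt_min (by linarith [h.1]) (by linarith [h.2])
      · norm_num
    have hgTpos : ∀ τ, 0 < gT τ := by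
      intro τ
      rw [hgT]; dsimp only
      split
      · norm_num
      · next h =>
        have := hSTgap τ.val τ.isLt h
        linarith [this]
    have hgVpos : ∀ vτ, 0 < gV vτ := by
      intro vτ
      rw [hgV]; dsimp only
      refine lt_min ?_ ?_
      · split
        · next h =>
          obtain ⟨h1, h2⟩ := hFrXgap vτ.1 vτ.2 h
          exact lt_min (by linarith) (by linarith)
        · norm_num
      · split
        · next h =>
          obtain ⟨h1, h2⟩ := hFrYgap vτ.1 vτ.2 h
          exact lt_min (by linarith) (by linarith)
        · norm_num
    have hεpos : 0 < ε := by
      refine lt_min (lt_min ?_ ?_) ?_ <;>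
        · rw [Finset.lt_inf'_iff]
          intro i _
          first | exact hgSpos i | exact hgTpos i | exact hgVpos i
    have hεgS : ∀ τ : Fin T, ε ≤ gS τ := fun τ =>
      le_trans (min_le_left _ _) (le_trans (min_le_left _ _)
        (Finset.inf'_le _ (Finset.mem_univ τ)))
    have hεgT : ∀ τ : Fin T, ε ≤ gT τ := fun τ =>
      le_trans (min_le_left _ _) (le_trans (min_le_right _ _)
        (Finset.inf'_le _ (Finset.mem_univ τ)))
    have hεgV : ∀ vτ, ε ≤ gV vτ := fun vτ =>
      le_trans (min_le_right _ _) (Finset.inf'_le _ (Finset.mem_univ vτ))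
    -- apply mkContra
    refine mkContra dx dy ε hεpos ?_ ?_ ?_ ?_ ?_ ⟨v0, τ0, hnz0⟩
    · intro v τ hne
      obtain ⟨h1, h2⟩ := hdx v τ hne
      have hg := hεgV (v, τ)
      rw [hgV] at hg; dsimp only at hg
      rw [if_pos h2] at hg
      have hg1 : ε ≤ WPoint.x p v τ - Lx v τ :=
        le_trans hg (le_trans (min_le_left _ _) (min_le_left _ _))
      have hg2 : ε ≤ Ux v τ - WPoint.x p v τ :=
        le_trans hg (le_trans (min_le_left _ _) (min_le_right _ _))
      exact ⟨h1, h2, by linarith, by linarith⟩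
    · intro v τ hne
      obtain ⟨h1, h2⟩ := hdy v τ hne
      have hg := hεgV (v, τ)
      rw [hgV] at hg; dsimp only at hg
      rw [if_pos h2] at hg
      have hg1 : ε ≤ WPoint.y p v τ - Ly v τ :=
        le_trans hg (le_trans (min_le_right _ _) (min_le_left _ _))
      have hg2 : ε ≤ Uy v τ - WPoint.y p v τ :=
        le_trans hg (le_trans (min_le_right _ _) (min_le_right _ _))
      exact ⟨h1, h2, by linarith, by linarith⟩
    · intro τ
      rw [hchar (τ.val + 1) (by omega)]
      split <;> norm_num
    · intro τ hD
      rw [hchar (τ.val + 1) (by omega)] at hD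
      have hin : b + 1 ≤ τ.val + 1 ∧ τ.val + 1 ≤ f := by
        by_contra hcon
        rw [if_neg hcon] at hD
        exact hD rfl
      have hint := HInt τ.val τ.isLt (by omega) (by omega)
      have hg := hεgS τ
      rw [hgS] at hg; dsimp only at hg
      rw [if_pos hint] at hg
      constructor
      · linarith [le_trans hg (min_le_left (WPoint.s p τ - Ls τ) (Us τ - WPoint.s p τ))]
      · linarith [le_trans hg (min_le_right (WPoint.s p τ - Ls τ) (Us τ - WPoint.s p τ))]
    · intro τ
      have hDval := hchar τ.val (by omega)
      have hgap : ¬ ST τ.val → (∑ v, WPoint.y p v τ) + ε ≤ st τ.val := by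
        intro hnst
        have hg := hεgT τ
        rw [hgT] at hg; dsimp only at hg
        rw [if_neg hnst] at hg
        linarith
      rw [hdysum τ, hDval]
      by_cases hτb : τ.val = b
      · rw [if_pos hτb, if_neg (by omega), if_neg (by omega)]
        rcases hab with h | ⟨h, hnst⟩
        · left; rw [h]; ring
        · right
          refine ⟨by rw [h]; ring, ?_⟩
          have : ¬ ST τ.val := by rw [hτb]; exact hnst
          have := hgap this
          linarith
      · by_cases hτf : τ.val = f
        · rw [if_neg hτb, if_pos hτf, if_pos (by omega)]
          rcases haf with h | ⟨h, hnst⟩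
          · left; rw [h]; ring
          · right
            refine ⟨by rw [h]; ring, ?_⟩
            have : ¬ ST τ.val := by rw [hτf]; exact hnst (by omega)
            have := hgap this
            linarith
        · rw [if_neg hτb, if_neg hτf]
          by_cases hin : b + 1 ≤ τ.val ∧ τ.val ≤ f
          · rw [if_pos hin]
            right
            refine ⟨by ring, ?_⟩
            have : ¬ ST τ.val := HST τ.val (by omega) (by omega)
            have := hgap this
            linarith
          · rw [if_neg hin]
            left; ring
  -- move builders
  have mkX : ∀ (m0 : ℕ) (hm0 : m0 < T) (v0 : Fin V), FrX v0 ⟨m0, hm0⟩ → ∀ e : ℝ, |e| ≤ 1 →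
      ∃ dxx : Fin V → Fin T → ℝ,
        (∀ v τ, dxx v τ ≠ 0 → |dxx v τ| ≤ 1 ∧ FrX v τ) ∧
        (∀ τ : Fin T, (∑ v, dxx v τ) = if τ.val = m0 then e else 0) ∧
        (∀ v τ, τ.val ≠ m0 → dxx v τ = 0) ∧
        dxx v0 ⟨m0, hm0⟩ = e := by
    intro m0 hm0 v0 hfr e he
    refine ⟨fun v τ => if v = v0 ∧ τ = ⟨m0, hm0⟩ then e else 0, ?_, ?_, ?_, ?_⟩ <;>
      dsimp only
    · intro v τ hne
      by_cases hc : v = v0 ∧ τ = ⟨m0, hm0⟩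
      · rw [if_pos hc]
        refine ⟨he, ?_⟩
        rw [hc.1, hc.2]; exact hfr
      · rw [if_neg hc] at hne; exact absurd rfl hne
    · intro τ
      by_cases hτ : τ = ⟨m0, hm0⟩
      · rw [if_pos (show τ.val = m0 by rw [hτ])]
        subst hτ
        simp
      · rw [if_neg (fun h => hτ (Fin.ext h))]
        apply Finset.sum_eq_zero
        intro v _
        rw [if_neg (fun hc => hτ hc.2)]
    · intro v τ hτ
      rw [if_neg (fun hc => hτ (by rw [hc.2]))]
    · rw [if_pos ⟨rfl, rfl⟩]
  have mkY : ∀ (m0 : ℕ) (hm0 : m0 < T) (v0 : Fin V), FrY v0 ⟨m0, hm0⟩ → ∀ e : ℝ, |e| ≤ 1 →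
      ∃ dyy : Fin V → Fin T → ℝ,
        (∀ v τ, dyy v τ ≠ 0 → |dyy v τ| ≤ 1 ∧ FrY v τ) ∧
        (∀ τ : Fin T, (∑ v, dyy v τ) = if τ.val = m0 then e else 0) ∧
        (∀ v τ, τ.val ≠ m0 → dyy v τ = 0) ∧
        dyy v0 ⟨m0, hm0⟩ = e := by
    intro m0 hm0 v0 hfr e he
    refine ⟨fun v τ => if v = v0 ∧ τ = ⟨m0, hm0⟩ then e else 0, ?_, ?_, ?_, ?_⟩ <;>
      dsimp only
    · intro v τ hne
      by_cases hc : v = v0 ∧ τ = ⟨m0, hm0⟩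
      · rw [if_pos hc]
        refine ⟨he, ?_⟩
        rw [hc.1, hc.2]; exact hfr
      · rw [if_neg hc] at hne; exact absurd rfl hne
    · intro τ
      by_cases hτ : τ = ⟨m0, hm0⟩
      · rw [if_pos (show τ.val = m0 by rw [hτ])]
        subst hτ
        simp
      · rw [if_neg (fun h => hτ (Fin.ext h))]
        apply Finset.sum_eq_zero
        intro v _
        rw [if_neg (fun hc => hτ hc.2)]
    · intro v τ hτ
      rw [if_neg (fun hc => hτ (by rw [hc.2]))]
    · rw [if_pos ⟨rfl, rfl⟩]
  -- final assembly
  have hsteq : st (t.val + 1) = WPoint.s p t := hstS t.val t.isLt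
  have memS : ∀ K : ℝ, KA K → ∀ P : Fin T → Prop,
      ReprOn Lx Ux Ly Uy P (st (t.val + 1) - K) →
      WPoint.s p t ∈ Sset s0 Ls Us Lx Ux Ly Uy := by
    intro K hKA P hR
    obtain ⟨lam, h1, _, h3⟩ := hR
    refine ⟨K, lam, hKA, h1, ?_⟩
    rw [← hsteq]
    linarith [h3]
  rcases claimB (t.val + 1) t.isLt with ⟨K, hKA, hR⟩ | ⟨b, hb1, ⟨hbT, hbfree⟩, hbint, hbst⟩
  · exact memS K hKA _ hR
  · by_cases hbt : WPoint.s p t = Ls t ∨ WPoint.s p t = Us t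
    · rcases hbt with h | h
      · exact ⟨Ls t, fun _ _ _ => 0, Or.inr (Or.inr (Or.inl ⟨t, rfl⟩)),
          fun _ _ _ => Or.inr (Or.inl rfl), by simp [h]⟩
      · exact ⟨Us t, fun _ _ _ => 0, Or.inr (Or.inr (Or.inr ⟨t, rfl⟩)),
          fun _ _ _ => Or.inr (Or.inl rfl), by simp [h]⟩
    · push_neg at hbt
      have hintt1 : Ls t < WPoint.s p t ∧ WPoint.s p t < Us t :=
        ⟨lt_of_le_of_ne (hsb t).1 (Ne.symm hbt.1), lt_of_le_of_ne (hsb t).2 hbt.2⟩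
      obtain ⟨dxb, dyb, ab, hsxb, hsyb, hEb, hYb, hab, hoffb, hnzb⟩ :
        ∃ (dxb dyb : Fin V → Fin T → ℝ) (ab : ℝ),
          (∀ v τ, dxb v τ ≠ 0 → |dxb v τ| ≤ 1 ∧ FrX v τ) ∧
          (∀ v τ, dyb v τ ≠ 0 → |dyb v τ| ≤ 1 ∧ FrY v τ) ∧
          (∀ τ : Fin T, (∑ v, dxb v τ) - (∑ v, dyb v τ) = if τ.val = b then 1 else 0) ∧
          (∀ τ : Fin T, (∑ v, dyb v τ) = if τ.val = b then ab else 0) ∧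
          (ab = 0 ∨ (ab = -1 ∧ ¬ ST b)) ∧
          (∀ v τ, τ.val ≠ b → dxb v τ = 0 ∧ dyb v τ = 0) ∧
          (∃ v1, dxb v1 ⟨b, hbT⟩ ≠ 0 ∨ dyb v1 ⟨b, hbT⟩ ≠ 0) := by
        rcases hbfree with ⟨vb, hvb⟩ | ⟨⟨vb, hvb⟩, hSTb⟩
        · obtain ⟨dxx, hs, hsum, hoff, hval⟩ := mkX b hbT vb hvb 1 (by norm_num)
          refine ⟨dxx, 0, 0, hs, ?_, ?_, ?_, Or.inl rfl, ?_, ⟨vb, Or.inl ?_⟩⟩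
          · intro v τ hne; exact absurd rfl hne
          · intro τ; rw [← hsum]; simp
          · intro τ; simp
          · intro v τ hτ; exact ⟨hoff v τ hτ, rfl⟩
          · rw [hval]; norm_num
        · obtain ⟨dyy, hs, hsum, hoff, hval⟩ := mkY b hbT vb hvb (-1) (by norm_num)
          refine ⟨0, dyy, -1, ?_, hs, ?_, hsum, Or.inr ⟨rfl, hSTb⟩, ?_, ⟨vb, Or.inr ?_⟩⟩
          · intro v τ hne; exact absurd rfl hne
          · intro τ
            rw [hsum τ]
            simp only [Pi.zero_apply, Finset.sum_const_zero, zero_sub]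
            split_ifs <;> norm_num
          · intro v τ hτ; exact ⟨rfl, hoff v τ hτ⟩
          · rw [hval]; norm_num
      rcases claimF (T - (t.val + 1)) (t.val + 1) (by omega) t.isLt with
        ⟨K, hKA, hR⟩ | ⟨f, hf1, ⟨hfT, hffree⟩, hCst, hCint⟩ | ⟨hst3, hint3⟩
      · exact memS K hKA _ hR
      · -- two-move case
        have hbfn : b < f := by omega
        obtain ⟨dxf, dyf, af, hsxf, hsyf, hEf, hYf, haf, hofff⟩ :
          ∃ (dxf dyf : Fin V → Fin T → ℝ) (af : ℝ),
            (∀ v τ, dxf v τ ≠ 0 → |dxf v τ| ≤ 1 ∧ FrX v τ) ∧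
            (∀ v τ, dyf v τ ≠ 0 → |dyf v τ| ≤ 1 ∧ FrY v τ) ∧
            (∀ τ : Fin T, (∑ v, dxf v τ) - (∑ v, dyf v τ) = if τ.val = f then -1 else 0) ∧
            (∀ τ : Fin T, (∑ v, dyf v τ) = if τ.val = f then af else 0) ∧
            (af = 1 ∨ (af = 0 ∧ (∀ hf : f < T, ¬ ST f))) ∧
            (∀ v τ, τ.val ≠ f → dxf v τ = 0 ∧ dyf v τ = 0) := by
          rcases hffree with ⟨⟨vf, hvf⟩, hSTf⟩ | ⟨vf, hvf⟩
          · obtain ⟨dxx, hs, hsum, hoff, hval⟩ := mkX f hfT vf hvf (-1) (by norm_num)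
            refine ⟨dxx, 0, 0, hs, ?_, ?_, ?_, Or.inr ⟨rfl, fun _ => hSTf⟩, ?_⟩
            · intro v τ hne; exact absurd rfl hne
            · intro τ; rw [← hsum]; simp
            · intro τ; simp
            · intro v τ hτ; exact ⟨hoff v τ hτ, rfl⟩
          · obtain ⟨dyy, hs, hsum, hoff, hval⟩ := mkY f hfT vf hvf 1 (by norm_num)
            refine ⟨0, dyy, 1, ?_, hs, ?_, hsum, Or.inl rfl, ?_⟩
            · intro v τ hne; exact absurd rfl hne
            · intro τ
              rw [hsum τ]
              simp only [Pi.zero_apply, Finset.sum_const_zero, zero_sub]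
              split_ifs <;> norm_num
            · intro v τ hτ; exact ⟨rfl, hoff v τ hτ⟩
        refine absurd (doCase b f (fun v τ => dxb v τ + dxf v τ)
          (fun v τ => dyb v τ + dyf v τ) ab af hbfn (le_of_lt hfT)
          ?_ ?_ ?_ ?_ ?_ ?_ ?_ hab haf) (fun h => h)
        · intro m hm
          have e1 := hEb ⟨m, hm⟩
          have e2 := hEf ⟨m, hm⟩
          show (if h : m < T then _ else _) = _
          rw [dif_pos hm]
          rw [Finset.sum_add_distrib, Finset.sum_add_distrib]
          calc (∑ v, dxb v ⟨m, hm⟩) + (∑ v, dxf v ⟨m, hm⟩) -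
                ((∑ v, dyb v ⟨m, hm⟩) + (∑ v, dyf v ⟨m, hm⟩))
              = ((∑ v, dxb v ⟨m, hm⟩) - (∑ v, dyb v ⟨m, hm⟩)) +
                ((∑ v, dxf v ⟨m, hm⟩) - (∑ v, dyf v ⟨m, hm⟩)) := by ring
            _ = (if m = b then 1 else 0) + (if m = f then (-1 : ℝ) else 0) := by
                rw [e1, e2]
            _ = (if m = b then 1 else if m = f then -1 else 0) := by
                split_ifs <;> first | (exfalso; omega) | norm_num
        · intro v τ hne
          by_cases hτb : τ.val = b
          · have h0 : dxf v τ = 0 := (hofff v τ (by omega)).1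
            rw [h0, add_zero] at hne ⊢
            exact hsxb v τ hne
          · have h0 : dxb v τ = 0 := (hoffb v τ hτb).1
            rw [h0, zero_add] at hne ⊢
            exact hsxf v τ hne
        · intro v τ hne
          by_cases hτb : τ.val = b
          · have h0 : dyf v τ = 0 := (hofff v τ (by omega)).2
            rw [h0, add_zero] at hne ⊢
            exact hsyb v τ hne
          · have h0 : dyb v τ = 0 := (hoffb v τ hτb).2
            rw [h0, zero_add] at hne ⊢
            exact hsyf v τ hne
        · obtain ⟨v1, h1⟩ := hnzb
          refine ⟨v1, ⟨b, hbT⟩, ?_⟩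
          rcases h1 with h | h
          · left
            rw [(hofff v1 ⟨b, hbT⟩ (by show b ≠ f; omega)).1, add_zero]
            exact h
          · right
            rw [(hofff v1 ⟨b, hbT⟩ (by show b ≠ f; omega)).2, add_zero]
            exact h
        · intro k hk h1 h2
          by_cases hk2 : k + 2 ≤ t.val + 1
          · exact hbint k hk h1 hk2
          · by_cases hk1 : k = t.val
            · subst hk1; exact hintt1
            · exact hCint k hk (by omega) (by omega)
        · intro k h1 h2
          by_cases hk1 : k + 1 ≤ t.val + 1
          · exact hbst k h1 hk1
          · exact hCst k (by omega) h2
        · intro τ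
          rw [Finset.sum_add_distrib, hYb τ, hYf τ]
      · -- single-move case
        refine absurd (doCase b T dxb dyb ab 0 hbT (le_refl T)
          ?_ hsxb hsyb ?_ ?_ ?_ ?_ hab (Or.inr ⟨rfl, fun hf => absurd hf (lt_irrefl T)⟩))
          (fun h => h)
        · intro m hm
          have e1 := hEb ⟨m, hm⟩
          show (if h : m < T then _ else _) = _
          rw [dif_pos hm, e1]
          split_ifs <;> first | (exfalso; omega) | norm_num
        · obtain ⟨v1, h1⟩ := hnzb
          exact ⟨v1, ⟨b, hbT⟩, h1⟩
        · intro k hk h1 h2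
          by_cases hk2 : k + 2 ≤ t.val + 1
          · exact hbint k hk h1 hk2
          · by_cases hk1 : k = t.val
            · subst hk1; exact hintt1
            · exact hint3 k hk (by omega)
        · intro k h1 h2
          by_cases hk1 : k + 1 ≤ t.val + 1
          · exact hbst k h1 hk1
          · exact hst3 k (by omega)
        · intro τ
          rw [hYb τ]
          split_ifs <;> first | (exfalso; omega) | norm_num
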